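/- Let K/L be an extension of H-graded fields with e_{K/L} = 1 (i.e., ρ(K^×) = ρ(L^×)) and f = [K₁:L₁] finite, let R be a graded valuation ring of L, and let A₁ be a valuation ring of K₁ extending R₁ = R ∩ L₁ (with local inclusion). Set N = f!. Then the set A of elements of K all of whose homogeneous components y (of degree h) satisfy y^N ∈ A₁^× · R_{h^N} is a graded valuation ring of K with A ∩ L = R and A ∩ K₁ = A₁, and it is the unique such extension of R with identity component A₁. -/

import Mathlib

open scoped DirectSum

/-- An `H`-graded field: a nonzero commutative ring with an internal grading by the
commutative group `H` in which every nonzero homogeneous element is invertible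
(with homogeneous inverse). -/
structure GradedField (H : Type*) [CommGroup H] [DecidableEq H] (K : Type*) [CommRing K] where
  comp : H → AddSubgroup K
  one_mem : (1 : K) ∈ comp 1
  mul_mem : ∀ {g h : H} {x y : K}, x ∈ comp g → y ∈ comp h → x * y ∈ comp (g * h)
  isInternal : DirectSum.IsInternal fun h : H => comp h
  zero_ne_one : (0 : K) ≠ 1
  inv_mem : ∀ {h : H} {x : K}, x ∈ comp h → x ≠ 0 → ∃ y ∈ comp h⁻¹, x * y = 1

namespace GradedField

variable {H : Type*} [CommGroup H] [DecidableEq H] {K : Type*} [CommRing K] (F : GradedField H K)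

/-- A homogeneous element. -/
def Homogeneous (x : K) : Prop := ∃ h, x ∈ F.comp h

/-- A subring is graded if each of its elements is a sum of homogeneous elements of the
subring. -/
def IsGradedSubring (R : Subring K) : Prop :=
  ∀ x ∈ R, x ∈ AddSubgroup.closure {y : K | y ∈ R ∧ F.Homogeneous y}

/-- A graded subfield: a graded subring closed under inverses of nonzero homogeneous
elements. -/
structure IsGradedSubfield (L : Subring K) : Prop where
  graded : F.IsGradedSubring L
  inv_mem : ∀ x ∈ L, F.Homogeneous x → x ≠ 0 → Ring.inverse x ∈ L

/-- A graded valuation ring of the graded subfield `L`: a graded subring `R ⊆ L` such that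
every nonzero homogeneous element of `L` lies in `R` or has its inverse in `R`. -/
def IsGradedValRing (L R : Subring K) : Prop :=
  R ≤ L ∧ F.IsGradedSubring R ∧
    ∀ x ∈ L, F.Homogeneous x → x ≠ 0 → (x ∈ R ∨ Ring.inverse x ∈ R)

/-- The identity component `K₁`, as a subring. -/
def oneComponent : Subring K where
  carrier := F.comp 1
  one_mem' := F.one_mem
  mul_mem' := fun ha hb => by simpa using F.mul_mem ha hb
  add_mem' := fun ha hb => (F.comp 1).add_mem ha hb
  zero_mem' := (F.comp 1).zero_mem
  neg_mem' := fun ha => (F.comp 1).neg_mem ha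

theorem mem_oneComponent {x : K} : x ∈ F.oneComponent ↔ x ∈ F.comp 1 := Iff.rfl

/-- The value group `ρ(L^×) ⊆ H` of a graded subfield `L`. -/
def valueGroup (L : Subring K)
    (hL : ∀ x ∈ L, F.Homogeneous x → x ≠ 0 → Ring.inverse x ∈ L) : Subgroup H where
  carrier := {h | ∃ x ∈ F.comp h, x ≠ 0 ∧ x ∈ L}
  one_mem' := ⟨1, F.one_mem, Ne.symm F.zero_ne_one, L.one_mem⟩
  mul_mem' := by
    rintro g h ⟨x, hx, hx0, hxL⟩ ⟨y, hy, hy0, hyL⟩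
    obtain ⟨x', hx', hxx'⟩ := F.inv_mem hx hx0
    obtain ⟨y', hy', hyy'⟩ := F.inv_mem hy hy0
    refine ⟨x * y, F.mul_mem hx hy, ?_, L.mul_mem hxL hyL⟩
    intro h0
    have h1 : x * y * (x' * y') = 1 := by rw [mul_mul_mul_comm, hxx', hyy', one_mul]
    rw [h0, zero_mul] at h1
    exact F.zero_ne_one h1
  inv_mem' := by
    rintro g ⟨x, hx, hx0, hxL⟩
    obtain ⟨y, hy, hxy⟩ := F.inv_mem hx hx0
    have hu : IsUnit x := IsUnit.of_mul_eq_one y hxy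
    have hyx : Ring.inverse x = y := by
      calc Ring.inverse x = Ring.inverse x * (x * y) := by rw [hxy, mul_one]
        _ = Ring.inverse x * x * y := by ring
        _ = y := by rw [Ring.inverse_mul_cancel x hu, one_mul]
    refine ⟨y, hy, ?_, ?_⟩
    · intro h0; rw [h0, mul_zero] at hxy; exact F.zero_ne_one hxy
    · rw [← hyx]; exact hL x hxL ⟨g, hx⟩ hx0

/-- The value group `ρ(K^×)` of the whole graded field. -/
def fullValueGroup : Subgroup H :=
  F.valueGroup ⊤ (fun _ _ _ _ => Subring.mem_top _)

/-- `K₁` as a module over `L₁ = K₁ ∩ L`. -/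
def oneSubmodule (L : Subring K) : Submodule ↥(F.oneComponent ⊓ L) K where
  carrier := F.comp 1
  add_mem' := fun ha hb => (F.comp 1).add_mem ha hb
  zero_mem' := (F.comp 1).zero_mem
  smul_mem' := fun c x hx => by
    have hc : (c : K) ∈ F.comp 1 := ((Subring.mem_inf).mp c.2).1
    have := F.mul_mem hc hx
    simpa [Subring.smul_def] using this

/-- A graded automorphism: a ring automorphism preserving each graded component. -/
def IsGradedAut (σ : RingAut K) : Prop := ∀ (h : H) (x : K), x ∈ F.comp h → σ x ∈ F.comp h

end GradedField

/-- The fixed subring `K^G` of a group of ring automorphisms. -/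
def fixedSubring {K : Type*} [CommRing K] (G : Subgroup (RingAut K)) : Subring K where
  carrier := {x | ∀ σ ∈ G, σ x = x}
  one_mem' := fun σ _ => map_one σ
  mul_mem' := fun ha hb σ hσ => by rw [map_mul, ha σ hσ, hb σ hσ]
  add_mem' := fun ha hb σ hσ => by rw [map_add, ha σ hσ, hb σ hσ]
  zero_mem' := fun σ _ => map_zero σ
  neg_mem' := fun ha σ hσ => by rw [map_neg, ha σ hσ]

theorem mem_fixedSubring {K : Type*} [CommRing K] {G : Subgroup (RingAut K)} {x : K} :
    x ∈ fixedSubring G ↔ ∀ σ ∈ G, σ x = x := Iff.rfl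


namespace GradedField

variable {H : Type*} [CommGroup H] [DecidableEq H] {K : Type*} [CommRing K]
variable (F : GradedField H K)

/-- Decomposition of an element into its homogeneous components. -/
noncomputable def decompose (x : K) : ⨁ h : H, ↥(F.comp h) :=
  (Equiv.ofBijective _ F.isInternal).symm x

/-- The degree-`h` homogeneous component of `x`. -/
noncomputable def component (h : H) (x : K) : K := (F.decompose x h : K)

/-- The inertia subgroup of `G`: graded automorphisms in `G` acting trivially on `K₁`. -/
def inertia (G : Subgroup (RingAut K)) : Subgroup (RingAut K) where
  carrier := {σ | σ ∈ G ∧ ∀ x ∈ F.comp 1, σ x = x}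
  one_mem' := ⟨G.one_mem, fun _ _ => rfl⟩
  mul_mem' := fun {a b} ha hb => ⟨G.mul_mem ha.1 hb.1, fun x hx => by
    show a (b x) = x
    rw [hb.2 x hx, ha.2 x hx]⟩
  inv_mem' := fun {a} ha => ⟨G.inv_mem ha.1, fun x hx => by
    conv_lhs => rw [← ha.2 x hx]
    exact a.symm_apply_apply x⟩

theorem mem_inertia {G : Subgroup (RingAut K)} {σ : RingAut K} :
    σ ∈ F.inertia G ↔ σ ∈ G ∧ ∀ x ∈ F.comp 1, σ x = x := Iff.rfl

end GradedField

/-- A subring `S` containing a subring `L`, viewed as an `L`-submodule of the ambient ring. -/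
def Subring.toSubmoduleOver {K : Type*} [CommRing K] (L S : Subring K) (hLS : L ≤ S) :
    Submodule ↥L K where
  carrier := S
  add_mem' := fun ha hb => S.add_mem ha hb
  zero_mem' := S.zero_mem
  smul_mem' := fun c x hx => S.mul_mem (hLS c.2) hx

section ZR

variable {H : Type*} [CommGroup H] [DecidableEq H] {K : Type*} [CommRing K]

/-- The Zariski–Riemann space of graded valuation rings of `K` containing `k₀`. -/
def GradedField.ZR (F : GradedField H K) (k₀ : Subring K) : Type _ :=
  {O : Subring K // F.IsGradedValRing ⊤ O ∧ k₀ ≤ O}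

/-- The set of homogeneous units (nonzero homogeneous elements) of `K`. -/
def GradedField.HomogUnits (F : GradedField H K) : Type _ :=
  {x : K // x ≠ 0 ∧ F.Homogeneous x}

open Classical in
/-- The embedding of the Zariski–Riemann space into `{0,1}^{K^×}` via characteristic
functions. -/
noncomputable def GradedField.chi (F : GradedField H K) (k₀ : Subring K) (O : F.ZR k₀) :
    F.HomogUnits → Bool :=
  fun x => decide (x.1 ∈ O.1)

/-- Basic open sets `P{F}∖{G}` of the constructible topology, for finite sets `F`, `G` of
homogeneous units. -/
def GradedField.constructibleBasis (F : GradedField H K) (k₀ : Subring K) :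
    Set (Set (F.ZR k₀)) :=
  {s | ∃ Fs Gs : Finset K, (∀ a ∈ Fs, a ≠ 0 ∧ F.Homogeneous a) ∧
    (∀ b ∈ Gs, b ≠ 0 ∧ F.Homogeneous b) ∧
    s = {O : F.ZR k₀ | (∀ a ∈ Fs, a ∈ O.1) ∧ ∀ b ∈ Gs, b ∉ O.1}}

/-- The constructible topology on the Zariski–Riemann space. -/
def GradedField.constructibleTop (F : GradedField H K) (k₀ : Subring K) :
    TopologicalSpace (F.ZR k₀) :=
  TopologicalSpace.generateFrom (F.constructibleBasis k₀)


namespace GradedField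

variable {H : Type*} [CommGroup H] [DecidableEq H] {K : Type*} [CommRing K] (F : GradedField H K)

theorem coe_decompose (x : K) :
    DirectSum.coeAddMonoidHom F.comp (F.decompose x) = x :=
  (Equiv.ofBijective _ F.isInternal).apply_symm_apply x

theorem decompose_eq_of {x : K} {v : ⨁ h : H, ↥(F.comp h)}
    (h : DirectSum.coeAddMonoidHom F.comp v = x) : F.decompose x = v :=
  F.isInternal.injective (by rw [coe_decompose, h])

theorem decompose_add (x y : K) :
    F.decompose (x + y) = F.decompose x + F.decompose y :=
  F.decompose_eq_of (by rw [map_add, coe_decompose, coe_decompose])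

theorem decompose_zero : F.decompose (0 : K) = 0 :=
  F.decompose_eq_of (by rw [map_zero])

theorem decompose_neg (x : K) : F.decompose (-x) = -F.decompose x :=
  F.decompose_eq_of (by rw [map_neg, coe_decompose])

theorem decompose_of_mem {g : H} {y : K} (hy : y ∈ F.comp g) :
    F.decompose y = DirectSum.of (fun h => ↥(F.comp h)) g ⟨y, hy⟩ :=
  F.decompose_eq_of (DirectSum.coeAddMonoidHom_of F.comp g ⟨y, hy⟩)

theorem component_mem (h : H) (x : K) : F.component h x ∈ F.comp h :=
  (F.decompose x h).2

theorem component_add (h : H) (x y : K) :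
    F.component h (x + y) = F.component h x + F.component h y := by
  unfold component
  rw [decompose_add]
  rfl

theorem component_zero (h : H) : F.component h (0 : K) = 0 := by
  unfold component
  rw [decompose_zero]
  rfl

theorem component_neg (h : H) (x : K) : F.component h (-x) = -F.component h x := by
  unfold component
  rw [decompose_neg]
  rfl

theorem component_of_mem_same {g : H} {y : K} (hy : y ∈ F.comp g) :
    F.component g y = y := by
  unfold component
  rw [F.decompose_of_mem hy, DirectSum.of_eq_same]

theorem component_of_mem_ne {g h : H} {y : K} (hy : y ∈ F.comp g) (hne : h ≠ g) :
    F.component h y = 0 := by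
  unfold component
  rw [F.decompose_of_mem hy, DirectSum.of_eq_of_ne _ _ _ hne]
  rfl

open Classical in
theorem exists_finset_sum_component (x : K) :
    ∃ s : Finset H, ∑ h ∈ s, F.component h x = x := by
  refine ⟨(F.decompose x).support, ?_⟩
  conv_rhs => rw [← F.coe_decompose x, ← DirectSum.sum_support_of (F.decompose x)]
  rw [map_sum]
  refine Finset.sum_congr rfl fun i _ => ?_
  rw [DirectSum.coeAddMonoidHom_of]
  rfl

/-- powers of homogeneous elements -/
theorem pow_mem_comp {g : H} {y : K} (hy : y ∈ F.comp g) (n : ℕ) :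
    y ^ n ∈ F.comp (g ^ n) := by
  induction n with
  | zero => simpa using F.one_mem
  | succ n ih => rw [pow_succ, pow_succ]; exact F.mul_mem ih hy

theorem mul_ne_zero_of_homog {g h : H} {x y : K} (hx : x ∈ F.comp g) (hy : y ∈ F.comp h)
    (hx0 : x ≠ 0) (hy0 : y ≠ 0) : x * y ≠ 0 := by
  obtain ⟨x', _, hxx'⟩ := F.inv_mem hx hx0
  obtain ⟨y', _, hyy'⟩ := F.inv_mem hy hy0
  intro h0
  have h1 : x * y * (x' * y') = 1 := by rw [mul_mul_mul_comm, hxx', hyy', one_mul]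
  rw [h0, zero_mul] at h1
  exact F.zero_ne_one h1

theorem inverse_spec {g : H} {x : K} (hx : x ∈ F.comp g) (hx0 : x ≠ 0) :
    x * Ring.inverse x = 1 ∧ Ring.inverse x ∈ F.comp g⁻¹ ∧ Ring.inverse x ≠ 0 := by
  obtain ⟨y, hy, hxy⟩ := F.inv_mem hx hx0
  have hu : IsUnit x := IsUnit.of_mul_eq_one y hxy
  have hyx : Ring.inverse x = y := by
    calc Ring.inverse x = Ring.inverse x * (x * y) := by rw [hxy, mul_one]
      _ = Ring.inverse x * x * y := by ring
      _ = y := by rw [Ring.inverse_mul_cancel x hu, one_mul]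
  refine ⟨by rw [hyx]; exact hxy, by rw [hyx]; exact hy, ?_⟩
  rw [hyx]
  intro h0
  rw [h0, mul_zero] at hxy
  exact F.zero_ne_one hxy

theorem cancel_right_homog {g : H} {x a b : K} (hx : x ∈ F.comp g) (hx0 : x ≠ 0)
    (h : a * x = b * x) : a = b := by
  obtain ⟨hx1, _, _⟩ := F.inverse_spec hx hx0
  calc a = a * x * Ring.inverse x := by rw [mul_assoc, hx1, mul_one]
    _ = b * x * Ring.inverse x := by rw [h]
    _ = b := by rw [mul_assoc, hx1, mul_one]

theorem IsGradedSubring.component_mem {S : Subring K} (hS : F.IsGradedSubring S)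
    {x : K} (hx : x ∈ S) (h : H) : F.component h x ∈ S := by
  have hcl := hS x hx
  refine AddSubgroup.closure_induction (p := fun y _ => F.component h y ∈ S)
    (fun y hy => ?_) ?_ (fun a b _ _ ha hb => ?_) (fun a _ ha => ?_) hcl
  · obtain ⟨hyS, g, hyg⟩ := hy
    by_cases hgh : h = g
    · subst hgh; rwa [F.component_of_mem_same hyg]
    · rw [F.component_of_mem_ne hyg hgh]; exact S.zero_mem
  · show F.component h (0 : K) ∈ S
    rw [F.component_zero]; exact S.zero_mem
  · show F.component h (a + b) ∈ S
    rw [F.component_add]; exact S.add_mem ha hb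
  · show F.component h (-a) ∈ S
    rw [F.component_neg]; exact S.neg_mem ha

end GradedField

namespace GradedField

theorem ring_inverse_eq_of {K : Type*} [CommRing K] {c w : K} (h : c * w = 1) :
    Ring.inverse c = w := by
  have hu : IsUnit c := IsUnit.of_mul_eq_one _ h
  calc Ring.inverse c = Ring.inverse c * (c * w) := by rw [h, mul_one]
    _ = (Ring.inverse c * c) * w := by ring
    _ = w := by rw [Ring.inverse_mul_cancel _ hu, one_mul]

variable {H : Type*} [CommGroup H] [DecidableEq H] {K : Type*} [CommRing K] (F : GradedField H K)

section BVal

variable {B : Subring K} (hB1 : B ≤ F.oneComponent)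
  (hBval : ∀ x ∈ F.oneComponent, x ≠ 0 → x ∈ B ∨ Ring.inverse x ∈ B)

include hBval in
theorem exists_dominant {ι : Type*} (s : Finset ι) (t : ι → K) :
    s.Nonempty → (∀ i ∈ s, t i ∈ F.comp 1 ∧ t i ≠ 0) →
    ∃ i ∈ s, ∀ j ∈ s, ∃ b ∈ B, t j = b * t i := by
  classical
  induction s using Finset.induction_on with
  | empty => rintro ⟨i, hi⟩ _; exact absurd hi (Finset.notMem_empty i)
  | @insert a s' ha ih =>
    intro _ ht
    by_cases hs' : s'.Nonempty
    · obtain ⟨i, his, hdom⟩ := ih hs' (fun i hi => ht i (Finset.mem_insert_of_mem hi))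
      obtain ⟨hta, hta0⟩ := ht a (Finset.mem_insert_self a s')
      obtain ⟨hti, hti0⟩ := ht i (Finset.mem_insert_of_mem his)
      have hinv := F.inverse_spec hti hti0
      set c := t a * Ring.inverse (t i) with hc
      have hc1 : c ∈ F.comp 1 := by simpa using F.mul_mem hta hinv.2.1
      have hc0 : c ≠ 0 := F.mul_ne_zero_of_homog hta hinv.2.1 hta0 hinv.2.2
      have hcti : c * t i = t a := by
        rw [hc, mul_assoc, mul_comm (Ring.inverse (t i)), hinv.1, mul_one]
      rcases hBval c hc1 hc0 with hcB | hcB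
      · refine ⟨i, Finset.mem_insert_of_mem his, fun j hj => ?_⟩
        rcases Finset.mem_insert.mp hj with rfl | hj
        · exact ⟨c, hcB, hcti.symm⟩
        · exact hdom j hj
      · have hcinv := F.inverse_spec hc1 hc0
        refine ⟨a, Finset.mem_insert_self a s', fun j hj => ?_⟩
        rcases Finset.mem_insert.mp hj with rfl | hj
        · exact ⟨1, B.one_mem, (one_mul _).symm⟩
        · obtain ⟨b, hb, hbj⟩ := hdom j hj
          refine ⟨b * Ring.inverse c, B.mul_mem hb hcB, ?_⟩
          have hia : Ring.inverse c * t a = t i := by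
            rw [← hcti, ← mul_assoc, mul_comm (Ring.inverse c), hcinv.1, one_mul]
          rw [hbj, ← hia]; ring
    · rw [Finset.not_nonempty_iff_eq_empty] at hs'; subst hs'
      refine ⟨a, Finset.mem_insert_self a ∅, fun j hj => ?_⟩
      rcases Finset.mem_insert.mp hj with rfl | hj
      · exact ⟨1, B.one_mem, (one_mul _).symm⟩
      · exact absurd hj (Finset.notMem_empty j)

include hB1 in
theorem nonunit_add_aux {x y : K} (hx : x ∈ B) (hx0 : x ≠ 0)
    (hyx : y * Ring.inverse x ∈ B) (hxu : ¬∃ v ∈ B, x * v = 1) :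
    ¬∃ v ∈ B, (x + y) * v = 1 := by
  rintro ⟨v, hv, hxyv⟩
  have hx1 : x ∈ F.comp 1 := hB1 hx
  have hxinv := F.inverse_spec hx1 hx0
  have hxc : x * (y * Ring.inverse x) = y := by
    rw [mul_comm y, ← mul_assoc, hxinv.1, one_mul]
  refine hxu ⟨(1 + y * Ring.inverse x) * v, B.mul_mem (B.add_mem B.one_mem hyx) hv, ?_⟩
  calc x * ((1 + y * Ring.inverse x) * v) = (x + x * (y * Ring.inverse x)) * v := by ring
    _ = (x + y) * v := by rw [hxc]
    _ = 1 := hxyv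

include hB1 hBval in
theorem nonunit_add {x y : K} (hx : x ∈ B) (hy : y ∈ B) (hxu : ¬∃ v ∈ B, x * v = 1)
    (hyu : ¬∃ v ∈ B, y * v = 1) : ¬∃ v ∈ B, (x + y) * v = 1 := by
  by_cases hx0 : x = 0
  · subst hx0; rw [show (0 : K) + y = y by ring]; exact hyu
  by_cases hy0 : y = 0
  · subst hy0; rw [add_zero]; exact hxu
  have hx1 : x ∈ F.comp 1 := hB1 hx
  have hy1 : y ∈ F.comp 1 := hB1 hy
  have hxinv := F.inverse_spec hx1 hx0
  have hyinv := F.inverse_spec hy1 hy0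
  have hc1 : y * Ring.inverse x ∈ F.comp 1 := by simpa using F.mul_mem hy1 hxinv.2.1
  have hc0 : y * Ring.inverse x ≠ 0 := F.mul_ne_zero_of_homog hy1 hxinv.2.1 hy0 hxinv.2.2
  rcases hBval _ hc1 hc0 with hcB | hcB
  · exact F.nonunit_add_aux hB1 hx hx0 hcB hxu
  · have hinvc : Ring.inverse (y * Ring.inverse x) = x * Ring.inverse y := by
      refine ring_inverse_eq_of ?_
      calc y * Ring.inverse x * (x * Ring.inverse y)
          = (y * Ring.inverse y) * (x * Ring.inverse x) := by ring
        _ = 1 := by rw [hxinv.1, hyinv.1, mul_one]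
    rw [hinvc] at hcB
    rw [add_comm]
    exact F.nonunit_add_aux hB1 hy hy0 hcB hyu

include hB1 hBval in
theorem nonunit_sum {ι : Type*} (s : Finset ι) (t : ι → K) :
    (∀ i ∈ s, t i ∈ B) → (∀ i ∈ s, ¬∃ v ∈ B, t i * v = 1) →
    ¬∃ v ∈ B, (∑ i ∈ s, t i) * v = 1 := by
  classical
  induction s using Finset.induction_on with
  | empty =>
    rintro _ _ ⟨v, _, hv⟩
    rw [Finset.sum_empty, zero_mul] at hv
    exact F.zero_ne_one hv
  | @insert a s' ha ih =>
    intro ht htu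
    rw [Finset.sum_insert ha]
    exact F.nonunit_add hB1 hBval (ht a (Finset.mem_insert_self a s'))
      (B.sum_mem fun i hi => ht i (Finset.mem_insert_of_mem hi))
      (htu a (Finset.mem_insert_self a s'))
      (ih (fun i hi => ht i (Finset.mem_insert_of_mem hi))
        (fun i hi => htu i (Finset.mem_insert_of_mem hi)))

include hB1 hBval in
theorem exists_unit_ratio {ι : Type*} [DecidableEq ι] (s : Finset ι) (t : ι → K)
    (ht : ∀ i ∈ s, t i ∈ F.comp 1 ∧ t i ≠ 0) (hsum : ∑ i ∈ s, t i = 0)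
    (hne : s.Nonempty) :
    ∃ i ∈ s, ∃ j ∈ s, i ≠ j ∧ ∃ u ∈ B, (∃ v ∈ B, u * v = 1) ∧ t i = u * t j := by
  obtain ⟨i₀, hi₀, hdom⟩ := F.exists_dominant hBval s t hne ht
  obtain ⟨hti₀, hti₀0⟩ := ht i₀ hi₀
  have hinv := F.inverse_spec hti₀ hti₀0
  set b : ι → K := fun j => t j * Ring.inverse (t i₀) with hbdef
  have hbB : ∀ j ∈ s, b j ∈ B := by
    intro j hj
    obtain ⟨b', hb', he⟩ := hdom j hj
    have : b j = b' := by
      rw [hbdef]; simp only []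
      rw [he, mul_assoc, hinv.1, mul_one]
    rw [this]; exact hb'
  have hbt : ∀ j ∈ s, b j * t i₀ = t j := by
    intro j hj
    rw [hbdef]; simp only []
    rw [mul_assoc, mul_comm (Ring.inverse (t i₀)), hinv.1, mul_one]
  have hbi₀ : b i₀ = 1 := by
    rw [hbdef]; simp only []; exact hinv.1
  have hsumb : ∑ j ∈ s, b j = 0 := by
    rw [hbdef, ← Finset.sum_mul, hsum, zero_mul]
  have hsume : ∑ j ∈ s.erase i₀, b j = -1 := by
    have := Finset.add_sum_erase s b hi₀
    rw [hsumb, hbi₀] at this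
    linear_combination this
  have : ¬∀ j ∈ s.erase i₀, ¬∃ v ∈ B, b j * v = 1 := by
    intro hall
    refine F.nonunit_sum hB1 hBval (s.erase i₀) b
      (fun i hi => hbB i (Finset.mem_of_mem_erase hi)) hall ?_
    exact ⟨-1, B.neg_mem B.one_mem, by rw [hsume]; ring⟩
  push_neg at this
  obtain ⟨j, hje, hju⟩ := this
  refine ⟨j, Finset.mem_of_mem_erase hje, i₀, hi₀, Finset.ne_of_mem_erase hje,
    b j, hbB j (Finset.mem_of_mem_erase hje), hju, (hbt j (Finset.mem_of_mem_erase hje)).symm⟩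

end BVal
end GradedField

namespace GradedField

variable {H : Type*} [CommGroup H] [DecidableEq H] {K : Type*} [CommRing K] (F : GradedField H K)

theorem pow_ne_zero_of_homog {g : H} {x : K} (hx : x ∈ F.comp g) (hx0 : x ≠ 0) (n : ℕ) :
    x ^ n ≠ 0 := by
  induction n with
  | zero => rw [pow_zero]; exact fun h => F.zero_ne_one h.symm
  | succ n ih =>
    rw [pow_succ]
    exact F.mul_ne_zero_of_homog (F.pow_mem_comp hx n) hx ih hx0

section Main
set_option synthInstance.maxHeartbeats 1000000
set_option maxHeartbeats 1000000

variable {L : Subring K} (hL : F.IsGradedSubfield L)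
variable {B : Subring K} (hB1 : B ≤ F.oneComponent)
  (hBval : ∀ x ∈ F.oneComponent, x ≠ 0 → x ∈ B ∨ Ring.inverse x ∈ B)
variable {f : ℕ}

include hL hB1 hBval in
theorem pow_factorial_decomp
    (hf : Module.rank ↥(F.oneComponent ⊓ L) ↥(F.oneSubmodule L) = f) (hf0 : 0 < f)
    {c : K} (hc : c ∈ F.comp 1) (hc0 : c ≠ 0) :
    ∃ u ∈ B, (∃ v ∈ B, u * v = 1) ∧ ∃ s ∈ L, s ∈ F.comp 1 ∧
      c ^ Nat.factorial f = u * s := by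
  classical
  have hpow : ∀ n : ℕ, c ^ n ∈ F.comp 1 := fun n => by simpa using F.pow_mem_comp hc n
  have hpow0 : ∀ n : ℕ, c ^ n ≠ 0 := F.pow_ne_zero_of_homog hc hc0
  -- Step 1: find d with 1 ≤ d ≤ f and c^d ∈ B^× · L₁
  have core : ∃ d : ℕ, 0 < d ∧ d ≤ f ∧ ∃ u ∈ B, (∃ v ∈ B, u * v = 1) ∧
      ∃ s ∈ L, s ∈ F.comp 1 ∧ c ^ d = u * s := by
    haveI : Nontrivial ↥(F.oneComponent ⊓ L) :=
      ⟨0, 1, fun h => F.zero_ne_one (congrArg Subtype.val h)⟩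
    set v : Fin (f + 1) → ↥(F.oneSubmodule L) := fun i => ⟨c ^ (i : ℕ), hpow i⟩ with hv
    have hnli : ¬ LinearIndependent ↥(F.oneComponent ⊓ L) v := by
      intro hli
      have hle := hli.cardinal_lift_le_rank
      rw [hf] at hle
      simp only [Cardinal.mk_fin, Cardinal.lift_natCast, Nat.cast_le] at hle
      omega
    obtain ⟨g, hg, i₁, hi₁⟩ := Fintype.not_linearIndependent_iff.mp hnli
    have hgK : ∑ i : Fin (f + 1), (g i : K) * c ^ (i : ℕ) = 0 := by
      calc ∑ i : Fin (f + 1), (g i : K) * c ^ (i : ℕ)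
          = ↑(∑ i : Fin (f + 1), g i • v i) := by
            rw [Submodule.coe_sum]
            exact Finset.sum_congr rfl fun i _ => rfl
        _ = 0 := by rw [hg]; rfl
    set s := Finset.univ.filter (fun i : Fin (f + 1) => g i ≠ 0) with hsdef
    set t : Fin (f + 1) → K := fun i => (g i : K) * c ^ (i : ℕ) with htdef
    have hgmem : ∀ i : Fin (f + 1), (g i : K) ∈ F.comp 1 ∧ (g i : K) ∈ L := by
      intro i
      have := (g i).2
      rw [Subring.mem_inf] at this
      exact ⟨this.1, this.2⟩
    have ht : ∀ i ∈ s, t i ∈ F.comp 1 ∧ t i ≠ 0 := by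
      intro i hi
      have hgi0 : (g i : K) ≠ 0 := by
        intro h0
        exact (Finset.mem_filter.mp hi).2 (Subtype.ext h0)
      constructor
      · simpa using F.mul_mem (hgmem i).1 (hpow i)
      · exact F.mul_ne_zero_of_homog (hgmem i).1 (hpow i) hgi0 (hpow0 i)
    have hsum : ∑ i ∈ s, t i = 0 := by
      rw [← hgK]
      refine Finset.sum_subset (Finset.filter_subset _ _) ?_
      intro i _ hi
      have : g i = 0 := by
        by_contra hgi
        exact hi (Finset.mem_filter.mpr ⟨Finset.mem_univ i, hgi⟩)
      rw [htdef]
      simp [this]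
    have hne : s.Nonempty := ⟨i₁, Finset.mem_filter.mpr ⟨Finset.mem_univ _, hi₁⟩⟩
    obtain ⟨i, hi, j, hj, hij, u, huB, huu, hratio⟩ :=
      F.exists_unit_ratio hB1 hBval s t ht hsum hne
    -- wlog (j : ℕ) < (i : ℕ)
    have main : ∀ i j : Fin (f + 1), i ∈ s → j ∈ s → (j : ℕ) < (i : ℕ) →
        ∀ u ∈ B, (∃ v ∈ B, u * v = 1) → t i = u * t j →
        ∃ d : ℕ, 0 < d ∧ d ≤ f ∧ ∃ u ∈ B, (∃ v ∈ B, u * v = 1) ∧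
          ∃ s' ∈ L, s' ∈ F.comp 1 ∧ c ^ d = u * s' := by
      intro i j hi hj hlt u huB huu heq
      have hgi0 : (g i : K) ≠ 0 := by
        intro h0
        exact (Finset.mem_filter.mp hi).2 (Subtype.ext h0)
      have hgj0 : (g j : K) ≠ 0 := by
        intro h0
        exact (Finset.mem_filter.mp hj).2 (Subtype.ext h0)
      have hd0 : 0 < (i : ℕ) - (j : ℕ) := Nat.sub_pos_of_lt hlt
      have hdf : (i : ℕ) - (j : ℕ) ≤ f := le_trans (Nat.sub_le _ _) (Nat.lt_succ_iff.mp i.2)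
      have hpowsplit : c ^ (i : ℕ) = c ^ ((i : ℕ) - (j : ℕ)) * c ^ (j : ℕ) := by
        rw [← pow_add]
        congr 1
        omega
      -- (g i) * c^(i-j) = u * (g j)
      have hkey : (g i : K) * c ^ ((i : ℕ) - (j : ℕ)) = u * (g j : K) := by
        refine F.cancel_right_homog (hpow (j : ℕ)) (hpow0 _) ?_
        calc (g i : K) * c ^ ((i : ℕ) - (j : ℕ)) * c ^ (j : ℕ)
            = (g i : K) * c ^ (i : ℕ) := by rw [mul_assoc, ← hpowsplit]
          _ = u * ((g j : K) * c ^ (j : ℕ)) := heq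
          _ = u * (g j : K) * c ^ (j : ℕ) := by ring
      have hgiinv := F.inverse_spec (hgmem i).1 hgi0
      have hcd : c ^ ((i : ℕ) - (j : ℕ)) = u * ((g j : K) * Ring.inverse (g i : K)) := by
        calc c ^ ((i : ℕ) - (j : ℕ))
            = (g i : K) * Ring.inverse (g i : K) * c ^ ((i : ℕ) - (j : ℕ)) := by
              rw [hgiinv.1, one_mul]
          _ = ((g i : K) * c ^ ((i : ℕ) - (j : ℕ))) * Ring.inverse (g i : K) := by ring
          _ = (u * (g j : K)) * Ring.inverse (g i : K) := by rw [hkey]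
          _ = u * ((g j : K) * Ring.inverse (g i : K)) := by ring
      refine ⟨(i : ℕ) - (j : ℕ), hd0, hdf, u, huB, huu,
        (g j : K) * Ring.inverse (g i : K), ?_, ?_, hcd⟩
      · exact L.mul_mem (hgmem j).2
          (hL.inv_mem _ (hgmem i).2 ⟨1, (hgmem i).1⟩ hgi0)
      · simpa using F.mul_mem (hgmem j).1 hgiinv.2.1
    have hvne : (i : ℕ) ≠ (j : ℕ) := fun h => hij (Fin.ext h)
    rcases Nat.lt_or_ge (j : ℕ) (i : ℕ) with hlt | hge
    · exact main i j hi hj hlt u huB huu hratio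
    · have hlt : (i : ℕ) < (j : ℕ) := lt_of_le_of_ne hge hvne
      obtain ⟨w, hwB, hw⟩ := huu
      refine main j i hj hi hlt w hwB ⟨u, huB, by rw [mul_comm]; exact hw⟩ ?_
      calc t j = (u * w) * t j := by rw [hw, one_mul]
        _ = w * (u * t j) := by ring
        _ = w * t i := by rw [← hratio]
  -- Step 2: raise to the power f!/d
  obtain ⟨d, hd0, hdf, u, huB, huu, s, hsL, hs1, hcd⟩ := core
  obtain ⟨m, hm⟩ := Nat.dvd_factorial hd0 hdf
  obtain ⟨w, hwB, hw⟩ := huu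
  refine ⟨u ^ m, B.pow_mem huB m, ⟨w ^ m, B.pow_mem hwB m, by rw [← mul_pow, hw, one_pow]⟩,
    s ^ m, L.pow_mem hsL m, by simpa using F.pow_mem_comp hs1 m, ?_⟩
  rw [hm, pow_mul, hcd, mul_pow]

include hL hB1 hBval in
theorem exists_pow_decomp
    (he : F.valueGroup L hL.inv_mem = F.fullValueGroup)
    (hf : Module.rank ↥(F.oneComponent ⊓ L) ↥(F.oneSubmodule L) = f) (hf0 : 0 < f)
    {h : H} {x : K} (hx : x ∈ F.comp h) (hx0 : x ≠ 0) :
    ∃ u ∈ B, (∃ v ∈ B, u * v = 1) ∧ ∃ m ∈ L, m ∈ F.comp (h ^ Nat.factorial f) ∧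
      m ≠ 0 ∧ x ^ Nat.factorial f = u * m := by
  have hh : h ∈ F.fullValueGroup := ⟨x, hx, hx0, Subring.mem_top x⟩
  rw [← he] at hh
  obtain ⟨l, hl, hl0, hlL⟩ := hh
  have hlinv := F.inverse_spec hl hl0
  set c := x * Ring.inverse l with hcdef
  have hc1 : c ∈ F.comp 1 := by simpa using F.mul_mem hx hlinv.2.1
  have hc0 : c ≠ 0 := F.mul_ne_zero_of_homog hx hlinv.2.1 hx0 hlinv.2.2
  obtain ⟨u, huB, huu, s, hsL, hs1, hcs⟩ := F.pow_factorial_decomp hL hB1 hBval hf hf0 hc1 hc0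
  have hx_eq : x = c * l := by
    rw [hcdef, mul_assoc, mul_comm (Ring.inverse l), hlinv.1, mul_one]
  have hxN : x ^ Nat.factorial f = u * (s * l ^ Nat.factorial f) := by
    rw [hx_eq, mul_pow, hcs]; ring
  refine ⟨u, huB, huu, s * l ^ Nat.factorial f,
    L.mul_mem hsL (L.pow_mem hlL _), ?_, ?_, hxN⟩
  · simpa using F.mul_mem hs1 (F.pow_mem_comp hl (Nat.factorial f))
  · intro h0
    rw [h0, mul_zero] at hxN
    exact F.pow_ne_zero_of_homog hx hx0 (Nat.factorial f) hxN

end Main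
end GradedField

set_option maxHeartbeats 2000000 in
set_option synthInstance.maxHeartbeats 1000000 in
/-- Let `K/L` be an extension of `H`-graded fields with `e_{K/L} = 1` and `f = [K₁:L₁]`
finite, `R` a graded valuation ring of `L`, `B` a valuation ring of `K₁` extending
`R₁ = R ∩ K₁` (with local inclusion), and `N = f!`.  Then the set of elements of `K` all of
whose homogeneous components `y` (of degree `h`) satisfy `y^N ∈ B^× · R_{h^N}` is a graded
valuation ring `A` of `K` with `A ∩ L = R` and `A ∩ K₁ = B`, and it is the unique such
extension of `R` with identity component `B`. -/
theorem GradedField.extension_from_oneComponent {H : Type*} [CommGroup H] [DecidableEq H]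
    {K : Type*} [CommRing K] (F : GradedField H K) (L : Subring K)
    (hL : F.IsGradedSubfield L)
    -- `e_{K/L} = 1`
    (he : F.valueGroup L hL.inv_mem = F.fullValueGroup)
    -- `f = [K₁:L₁]` is finite
    (f : ℕ) (hf0 : 0 < f)
    (hf : Module.rank ↥(F.oneComponent ⊓ L) ↥(F.oneSubmodule L) = f)
    (R : Subring K) (hR : F.IsGradedValRing L R)
    -- `B` is a valuation ring of `K₁` …
    (B : Subring K) (hB1 : B ≤ F.oneComponent)
    (hBval : ∀ x ∈ F.oneComponent, x ≠ 0 → x ∈ B ∨ Ring.inverse x ∈ B)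
    -- … extending `R₁ = R ∩ K₁` …
    (hBext : B ⊓ L = R ⊓ F.oneComponent)
    -- … with local inclusion `R₁ → B`
    (hloc : ∀ x ∈ R ⊓ F.oneComponent, (∃ v ∈ B, x * v = 1) →
      ∃ v ∈ R ⊓ F.oneComponent, x * v = 1) :
    ∃ A : Subring K,
      (A : Set K) = {x : K | ∀ h : H, ∃ u ∈ B, (∃ v ∈ B, u * v = 1) ∧
        ∃ r ∈ R, r ∈ F.comp (h ^ Nat.factorial f) ∧
          F.component h x ^ Nat.factorial f = u * r} ∧
      F.IsGradedValRing ⊤ A ∧ A ⊓ L = R ∧ A ⊓ F.oneComponent = B ∧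
      ∀ A' : Subring K,
        F.IsGradedValRing ⊤ A' ∧ A' ⊓ L = R ∧ A' ⊓ F.oneComponent = B → A' = A := by 
  classical
  set N := Nat.factorial f with hNdef
  have hN0 : 0 < N := Nat.factorial_pos f
  -- the key predicate
  set Q : H → K → Prop := fun h y => ∃ u ∈ B, (∃ v ∈ B, u * v = 1) ∧
      ∃ r ∈ R, r ∈ F.comp (h ^ N) ∧ y ^ N = u * r with hQdef
  -- recovering y from y^N and its inverse
  have hrecover : ∀ {g : H} {y : K}, y ∈ F.comp g → y ≠ 0 →
      y ^ N * Ring.inverse y ^ (N - 1) = y := by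
    intro g y hyg hy0
    have hinv := F.inverse_spec hyg hy0
    have hNsucc : N = (N - 1) + 1 := (Nat.succ_pred_eq_of_pos hN0).symm
    calc y ^ N * Ring.inverse y ^ (N - 1)
        = (y * y ^ (N - 1)) * Ring.inverse y ^ (N - 1) := by
          rw [← pow_succ', ← hNsucc]
      _ = y * (y * Ring.inverse y) ^ (N - 1) := by rw [mul_pow]; ring
      _ = y := by rw [hinv.1, one_pow, mul_one]
  -- basic facts about Q
  have hQ0 : ∀ h : H, Q h 0 := by
    intro h
    exact ⟨1, B.one_mem, ⟨1, B.one_mem, mul_one 1⟩, 0, R.zero_mem, (F.comp (h ^ N)).zero_mem,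
      by rw [zero_pow hN0.ne', mul_zero]⟩
  have hQhom : ∀ {h : H} {y : K}, y ∈ F.comp h → Q h y → ∀ g : H, Q g (F.component g y) := by
    intro h y hyh hQy g
    by_cases hgh : g = h
    · subst hgh; rwa [F.component_of_mem_same hyh]
    · rw [F.component_of_mem_ne hyh hgh]; exact hQ0 g
  have hQmul : ∀ {g h : H} {y z : K}, y ∈ F.comp g → z ∈ F.comp h →
      Q g y → Q h z → Q (g * h) (y * z) := by
    rintro g h y z _ _ ⟨u, huB, ⟨v, hvB, huv⟩, r, hrR, hrc, heq⟩
      ⟨u', huB', ⟨v', hvB', huv'⟩, r', hrR', hrc', heq'⟩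
    refine ⟨u * u', B.mul_mem huB huB', ⟨v * v', B.mul_mem hvB hvB', ?_⟩,
      r * r', R.mul_mem hrR hrR', ?_, ?_⟩
    · rw [mul_mul_mul_comm, huv, huv', one_mul]
    · rw [mul_pow]; exact F.mul_mem hrc hrc'
    · rw [mul_pow, heq, heq']; ring
  have hQadd_aux : ∀ {h : H} {y z : K}, y ∈ F.comp h → z ∈ F.comp h →
      y ≠ 0 → z ≠ 0 → y + z ≠ 0 → z * Ring.inverse y ∈ B → Q h y → Q h (y + z) := by
    rintro h y z hyh hzh hy0 hz0 hyz0 hzyB ⟨u, huB, ⟨v, hvB, huv⟩, r, hrR, hrc, heq⟩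
    have hyinv := F.inverse_spec hyh hy0
    set t := 1 + z * Ring.inverse y with htdef
    have ht1 : t ∈ F.comp 1 := by
      refine (F.comp 1).add_mem F.one_mem ?_
      simpa using F.mul_mem hzh hyinv.2.1
    have hyt : y * t = y + z := by
      rw [htdef, mul_add, mul_one]
      congr 1
      rw [mul_comm z, ← mul_assoc, hyinv.1, one_mul]
    have ht0 : t ≠ 0 := by
      intro h0
      rw [h0, mul_zero] at hyt
      exact hyz0 hyt.symm
    have htB : t ∈ B := B.add_mem B.one_mem hzyB
    obtain ⟨u₁, huB₁, ⟨v₁, hvB₁, huv₁⟩, s, hsL, hs1, hts⟩ :=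
      F.pow_factorial_decomp hL hB1 hBval hf hf0 ht1 ht0
    have hsB : s ∈ B := by
      have : s = v₁ * t ^ N := by
        calc s = (u₁ * v₁) * s := by rw [huv₁, one_mul]
          _ = v₁ * (u₁ * s) := by ring
          _ = v₁ * t ^ N := by rw [← hts]
      rw [this]
      exact B.mul_mem hvB₁ (B.pow_mem htB N)
    have hsR : s ∈ R := by
      have : s ∈ B ⊓ L := ⟨hsB, hsL⟩
      rw [hBext] at this
      exact this.1
    refine ⟨u * u₁, B.mul_mem huB huB₁, ⟨v * v₁, B.mul_mem hvB hvB₁, ?_⟩,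
      r * s, R.mul_mem hrR hsR, ?_, ?_⟩
    · rw [mul_mul_mul_comm, huv, huv₁, one_mul]
    · have := F.mul_mem hrc hs1
      simpa using this
    · rw [← hyt, mul_pow, heq, hts]; ring
  have hQadd : ∀ {h : H} {y z : K}, y ∈ F.comp h → z ∈ F.comp h →
      Q h y → Q h z → Q h (y + z) := by
    intro h y z hyh hzh hQy hQz
    by_cases hy0 : y = 0
    · subst hy0; rwa [zero_add]
    by_cases hz0 : z = 0
    · subst hz0; rwa [add_zero]
    by_cases hyz0 : y + z = 0
    · rw [hyz0]; exact hQ0 h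
    have hyinv := F.inverse_spec hyh hy0
    have hzinv := F.inverse_spec hzh hz0
    have hc1 : z * Ring.inverse y ∈ F.comp 1 := by simpa using F.mul_mem hzh hyinv.2.1
    have hc0 : z * Ring.inverse y ≠ 0 := F.mul_ne_zero_of_homog hzh hyinv.2.1 hz0 hyinv.2.2
    rcases hBval _ hc1 hc0 with hcB | hcB
    · exact hQadd_aux hyh hzh hy0 hz0 hyz0 hcB hQy
    · have hinvc : Ring.inverse (z * Ring.inverse y) = y * Ring.inverse z := by
        refine GradedField.ring_inverse_eq_of ?_
        calc z * Ring.inverse y * (y * Ring.inverse z)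
            = (z * Ring.inverse z) * (y * Ring.inverse y) := by ring
          _ = 1 := by rw [hyinv.1, hzinv.1, mul_one]
      rw [hinvc] at hcB
      rw [add_comm]
      exact hQadd_aux hzh hyh hz0 hy0 (by rwa [add_comm]) hcB hQz
  have hQneg : ∀ {h : H} {y : K}, Q h y → Q h (-y) := by
    rintro h y ⟨u, huB, huu, r, hrR, hrc, heq⟩
    rcases Nat.even_or_odd N with hev | hod
    · exact ⟨u, huB, huu, r, hrR, hrc, by rw [hev.neg_pow, heq]⟩
    · exact ⟨u, huB, huu, -r, R.neg_mem hrR, (F.comp (h ^ N)).neg_mem hrc,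
        by rw [hod.neg_pow, heq]; ring⟩
  -- the underlying additive subgroup
  set A₀ : AddSubgroup K :=
    { carrier := {x : K | ∀ h : H, Q h (F.component h x)}
      zero_mem' := fun h => by rw [F.component_zero]; exact hQ0 h
      add_mem' := fun {a b} ha hb h => by
        rw [F.component_add]
        exact hQadd (F.component_mem h a) (F.component_mem h b) (ha h) (hb h)
      neg_mem' := fun {a} ha h => by
        rw [F.component_neg]; exact hQneg (ha h) } with hA₀def
  have hgen : {y : K | ∃ g : H, y ∈ F.comp g ∧ Q g y} ⊆ A₀ := by
    rintro y ⟨g, hyg, hQy⟩ h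
    exact hQhom hyg hQy h
  have hclosure : AddSubgroup.closure {y : K | ∃ g : H, y ∈ F.comp g ∧ Q g y} ≤ A₀ :=
    (AddSubgroup.closure_le A₀).mpr hgen
  -- the subring A
  set A : Subring K :=
    { carrier := {x : K | ∀ h : H, Q h (F.component h x)}
      zero_mem' := A₀.zero_mem
      add_mem' := fun {a b} ha hb => A₀.add_mem ha hb
      neg_mem' := fun {a} ha => A₀.neg_mem ha
      one_mem' := by
        intro h
        by_cases h1 : h = 1
        · subst h1
          rw [F.component_of_mem_same F.one_mem]
          exact ⟨1, B.one_mem, ⟨1, B.one_mem, mul_one 1⟩, 1, R.one_mem,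
            by rw [one_pow]; exact F.one_mem, by rw [one_pow, mul_one]⟩
        · rw [F.component_of_mem_ne F.one_mem h1]; exact hQ0 h
      mul_mem' := by
        intro a b ha hb
        obtain ⟨sa, hsa⟩ := F.exists_finset_sum_component a
        obtain ⟨sb, hsb⟩ := F.exists_finset_sum_component b
        have hab : a * b = ∑ g ∈ sa, ∑ h ∈ sb, F.component g a * F.component h b := by
          conv_lhs => rw [← hsa, ← hsb]
          rw [Finset.sum_mul_sum]
        have : a * b ∈ A₀ := by
          rw [hab]
          apply hclosure
          refine AddSubgroup.sum_mem _ fun g hg => AddSubgroup.sum_mem _ fun h hh => ?_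
          exact AddSubgroup.subset_closure
            ⟨g * h, F.mul_mem (F.component_mem g a) (F.component_mem h b),
              hQmul (F.component_mem g a) (F.component_mem h b) (ha g) (hb h)⟩
        exact this } with hAdef
  have hmemA : ∀ {x : K}, x ∈ A ↔ ∀ h : H, Q h (F.component h x) := fun {x} => Iff.rfl
  -- B is contained in A (pointwise Q fact)
  have hQoneB : ∀ {x : K}, x ∈ B → x ≠ 0 → Q 1 x := by
    intro x hxB hx0
    have hx1 : x ∈ F.comp 1 := hB1 hxB
    obtain ⟨u, huB, ⟨v, hvB, huv⟩, s, hsL, hs1, hxs⟩ :=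
      F.pow_factorial_decomp hL hB1 hBval hf hf0 hx1 hx0
    have hsB : s ∈ B := by
      have : s = v * x ^ N := by
        calc s = (u * v) * s := by rw [huv, one_mul]
          _ = v * (u * s) := by ring
          _ = v * x ^ N := by rw [← hxs]
      rw [this]
      exact B.mul_mem hvB (B.pow_mem hxB N)
    have hsR : s ∈ R := by
      have : s ∈ B ⊓ L := ⟨hsB, hsL⟩
      rw [hBext] at this
      exact this.1
    exact ⟨u, huB, ⟨v, hvB, huv⟩, s, hsR, by rw [one_pow]; exact hs1, hxs⟩
  -- main conclusion
  refine ⟨A, rfl, ⟨le_top, ?_, ?_⟩, ?_, ?_, ?_⟩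
  · -- A is a graded subring
    intro x hx
    obtain ⟨s, hs⟩ := F.exists_finset_sum_component x
    rw [← hs]
    refine AddSubgroup.sum_mem _ fun g hg => AddSubgroup.subset_closure ?_
    exact ⟨fun h => hQhom (F.component_mem g x) (hx g) h, ⟨g, F.component_mem g x⟩⟩
  · -- valuation property
    rintro x - ⟨g, hxg⟩ hx0
    obtain ⟨u, huB, ⟨v, hvB, huv⟩, m, hmL, hmc, hm0, heq⟩ :=
      F.exists_pow_decomp hL hB1 hBval he hf hf0 hxg hx0
    rcases hR.2.2 m hmL ⟨g ^ N, hmc⟩ hm0 with hmR | hmiR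
    · left
      exact fun h => hQhom hxg ⟨u, huB, ⟨v, hvB, huv⟩, m, hmR, hmc, heq⟩ h
    · right
      have hxinv := F.inverse_spec hxg hx0
      have hminv := F.inverse_spec hmc hm0
      have hxNinv : Ring.inverse x ^ N = v * Ring.inverse m := by
        refine F.cancel_right_homog (F.pow_mem_comp hxg N)
          (F.pow_ne_zero_of_homog hxg hx0 N) ?_
        calc Ring.inverse x ^ N * x ^ N = (x * Ring.inverse x) ^ N := by
              rw [← mul_pow]; ring_nf
          _ = 1 := by rw [hxinv.1, one_pow]
          _ = (v * u) * (Ring.inverse m * m) := by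
              rw [mul_comm v u, huv, mul_comm (Ring.inverse m), hminv.1, mul_one]
          _ = (v * Ring.inverse m) * (u * m) := by ring
          _ = (v * Ring.inverse m) * x ^ N := by rw [← heq]
      have hQinv : Q g⁻¹ (Ring.inverse x) := by
        refine ⟨v, hvB, ⟨u, huB, by rw [mul_comm]; exact huv⟩, Ring.inverse m, hmiR, ?_,
          hxNinv⟩
        rw [inv_pow]
        exact hminv.2.1
      exact fun h => hQhom hxinv.2.1 hQinv h
  · -- A ⊓ L = R
    refine le_antisymm ?_ ?_
    · intro x hx
      rw [Subring.mem_inf] at hx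
      obtain ⟨hxA, hxL⟩ := hx
      obtain ⟨s, hs⟩ := F.exists_finset_sum_component x
      rw [← hs]
      refine R.sum_mem fun g hg => ?_
      set y := F.component g x with hydef
      have hyL : y ∈ L := GradedField.IsGradedSubring.component_mem F hL.graded hxL g
      have hyg : y ∈ F.comp g := F.component_mem g x
      by_cases hy0 : y = 0
      · rw [hy0]; exact R.zero_mem
      obtain ⟨u, huB, ⟨v, hvB, huv⟩, r, hrR, hrc, heq⟩ := hxA g
      have hyN0 : y ^ N ≠ 0 := F.pow_ne_zero_of_homog hyg hy0 N
      have hr0 : r ≠ 0 := by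
        intro h0
        rw [h0, mul_zero] at heq
        exact hyN0 heq
      have hrinv := F.inverse_spec hrc hr0
      have hu_eq : u = y ^ N * Ring.inverse r := by
        calc u = u * (r * Ring.inverse r) := by rw [hrinv.1, mul_one]
          _ = (u * r) * Ring.inverse r := by ring
          _ = y ^ N * Ring.inverse r := by rw [← heq]
      have hrL : r ∈ L := hR.1 hrR
      have huL : u ∈ L := by
        rw [hu_eq]
        exact L.mul_mem (L.pow_mem hyL N) (hL.inv_mem r hrL ⟨g ^ N, hrc⟩ hr0)
      have huR : u ∈ R := by
        have : u ∈ B ⊓ L := ⟨huB, huL⟩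
        rw [hBext] at this
        exact this.1
      have hyNR : y ^ N ∈ R := by rw [heq]; exact R.mul_mem huR hrR
      rcases hR.2.2 y hyL ⟨g, hyg⟩ hy0 with hyR | hyiR
      · exact hyR
      · rw [← hrecover hyg hy0]
        exact R.mul_mem hyNR (R.pow_mem hyiR (N - 1))
    · intro x hxR
      rw [Subring.mem_inf]
      refine ⟨?_, hR.1 hxR⟩
      intro h
      have hyR : F.component h x ∈ R :=
        GradedField.IsGradedSubring.component_mem F hR.2.1 hxR h
      exact ⟨1, B.one_mem, ⟨1, B.one_mem, mul_one 1⟩, F.component h x ^ N,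
        R.pow_mem hyR N, F.pow_mem_comp (F.component_mem h x) N, (one_mul _).symm⟩
  · -- A ⊓ K₁ = B
    refine le_antisymm ?_ ?_
    · intro x hx
      rw [Subring.mem_inf] at hx
      obtain ⟨hxA, hx1⟩ := hx
      have hx1' : x ∈ F.comp 1 := hx1
      by_cases hx0 : x = 0
      · rw [hx0]; exact B.zero_mem
      have hQx : Q 1 x := by
        have := hxA 1
        rwa [F.component_of_mem_same hx1'] at this
      obtain ⟨u, huB, ⟨v, hvB, huv⟩, r, hrR, hrc, heq⟩ := hQx
      rw [one_pow] at hrc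
      have hrB : r ∈ B := by
        have : r ∈ R ⊓ F.oneComponent := ⟨hrR, hrc⟩
        rw [← hBext] at this
        exact this.1
      have hxNB : x ^ N ∈ B := by rw [heq]; exact B.mul_mem huB hrB
      rcases hBval x hx1 hx0 with hxB | hxiB
      · exact hxB
      · rw [← hrecover hx1' hx0]
        exact B.mul_mem hxNB (B.pow_mem hxiB (N - 1))
    · intro x hxB
      rw [Subring.mem_inf]
      refine ⟨?_, hB1 hxB⟩
      by_cases hx0 : x = 0
      · rw [hx0]; exact A.zero_mem
      intro h
      exact hQhom (hB1 hxB) (hQoneB hxB hx0) h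
  · -- uniqueness
    rintro A' ⟨hval', hRL', hB'⟩
    have hBA' : B ≤ A' := by
      rw [← hB']; exact inf_le_left
    have hRA' : R ≤ A' := by
      rw [← hRL']; exact inf_le_left
    refine le_antisymm ?_ ?_
    · -- A' ≤ A
      intro x hx
      have hxcl := hval'.2.1 x hx
      have hsub : {y : K | y ∈ A' ∧ F.Homogeneous y} ⊆ (A.toAddSubgroup : Set K) := by
        rintro y ⟨hyA', g, hyg⟩
        by_cases hy0 : y = 0
        · rw [hy0]; exact A.zero_mem
        obtain ⟨u, huB, ⟨v, hvB, huv⟩, m, hmL, hmc, hm0, heq⟩ :=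
          F.exists_pow_decomp hL hB1 hBval he hf hf0 hyg hy0
        have hmA' : m ∈ A' := by
          have : m = v * y ^ N := by
            calc m = (u * v) * m := by rw [huv, one_mul]
              _ = v * (u * m) := by ring
              _ = v * y ^ N := by rw [← heq]
          rw [this]
          exact A'.mul_mem (hBA' hvB) (A'.pow_mem hyA' N)
        have hmR : m ∈ R := by
          rw [← hRL', Subring.mem_inf]
          exact ⟨hmA', hmL⟩
        exact fun h => hQhom hyg ⟨u, huB, ⟨v, hvB, huv⟩, m, hmR, hmc, heq⟩ h
      exact (AddSubgroup.closure_le A.toAddSubgroup).mpr hsub hxcl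
    · -- A ≤ A'
      intro x hx
      obtain ⟨s, hs⟩ := F.exists_finset_sum_component x
      rw [← hs]
      refine A'.sum_mem fun g hg => ?_
      set y := F.component g x with hydef
      have hyg : y ∈ F.comp g := F.component_mem g x
      by_cases hy0 : y = 0
      · rw [hy0]; exact A'.zero_mem
      obtain ⟨u, huB, ⟨v, hvB, huv⟩, r, hrR, hrc, heq⟩ := hx g
      have hyNA' : y ^ N ∈ A' := by
        rw [heq]
        exact A'.mul_mem (hBA' huB) (hRA' hrR)
      rcases hval'.2.2 y (Subring.mem_top y) ⟨g, hyg⟩ hy0 with hyA' | hyiA'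
      · exact hyA'
      · rw [← hrecover hyg hy0]
        exact A'.mul_mem hyNA' (A'.pow_mem hyiA' (N - 1))
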